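/- For every real number k ≥ 1 and all mass functions m1, m2, m3 on Ω, Σ_{A⊆Ω} |q_{m1 ⊚∩ m3}(A) − q_{m2 ⊚∩ m3}(A)|^k ≤ Σ_{A⊆Ω} |q_{m1}(A) − q_{m2}(A)|^k. Consequently the L_k norm based distance between commonality functions is 1-Lipschitz with respect to conjunctive combination with a fixed mass function. -/
import Mathlib


open Finset

/-- A mass function on a finite frame `Ω`: nonnegative and sums to one over all subsets. -/
def IsMass {Ω : Type*} [Fintype Ω] (m : Finset Ω → ℝ) : Prop :=
  (∀ A, 0 ≤ m A) ∧ ∑ A : Finset Ω, m A = 1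

/-- Commonality (inclusion functional): `q m A = ∑_{E ⊇ A} m E`. -/
def commonality {Ω : Type*} [Fintype Ω] [DecidableEq Ω] (m : Finset Ω → ℝ) (A : Finset Ω) : ℝ :=
  ∑ E : Finset Ω, if A ⊆ E then m E else 0

/-- Plausibility (hitting functional): `pl m A = ∑_{E ∩ A ≠ ∅} m E`. -/
def plaus {Ω : Type*} [Fintype Ω] [DecidableEq Ω] (m : Finset Ω → ℝ) (A : Finset Ω) : ℝ :=
  ∑ E : Finset Ω, if E ∩ A ≠ ∅ then m E else 0

/-- Implicability: `b m A = ∑_{E ⊆ A} m E`. -/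
def implic {Ω : Type*} [Fintype Ω] [DecidableEq Ω] (m : Finset Ω → ℝ) (A : Finset Ω) : ℝ :=
  ∑ E : Finset Ω, if E ⊆ A then m E else 0

/-- Conjunctive combination: `(m1 ⊚∩ m2)(E) = ∑_{A ∩ B = E} m1 A * m2 B`. -/
def conjC {Ω : Type*} [Fintype Ω] [DecidableEq Ω] (m1 m2 : Finset Ω → ℝ) (E : Finset Ω) : ℝ :=
  ∑ A : Finset Ω, ∑ B : Finset Ω, if A ∩ B = E then m1 A * m2 B else 0

/-- Disjunctive combination: `(m1 ⊚∪ m2)(E) = ∑_{A ∪ B = E} m1 A * m2 B`. -/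
def disjC {Ω : Type*} [Fintype Ω] [DecidableEq Ω] (m1 m2 : Finset Ω → ℝ) (E : Finset Ω) : ℝ :=
  ∑ A : Finset Ω, ∑ B : Finset Ω, if A ∪ B = E then m1 A * m2 B else 0

/-- Categorical mass function `m_A`. -/
def categorical {Ω : Type*} [Fintype Ω] [DecidableEq Ω] (A : Finset Ω) : Finset Ω → ℝ :=
  fun E => if E = A then 1 else 0

lemma commonality_conjC {Ω : Type*} [Fintype Ω] [DecidableEq Ω]
    (m1 m3 : Finset Ω → ℝ) (A : Finset Ω) :
    commonality (conjC m1 m3) A = commonality m1 A * commonality m3 A := by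
  unfold commonality conjC
  rw [Finset.sum_mul_sum]
  have lhs : ∀ E : Finset Ω,
      (if A ⊆ E then ∑ B : Finset Ω, ∑ C : Finset Ω, (if B ∩ C = E then m1 B * m3 C else 0) else 0)
      = ∑ B : Finset Ω, ∑ C : Finset Ω, (if A ⊆ E ∧ B ∩ C = E then m1 B * m3 C else 0) := by
    intro E
    split_ifs with h <;> simp [h]
  simp_rw [lhs]
  rw [Finset.sum_comm]
  refine Finset.sum_congr rfl fun B _ => ?_
  rw [Finset.sum_comm]
  refine Finset.sum_congr rfl fun C _ => ?_
  have : ∀ E : Finset Ω, (if A ⊆ E ∧ B ∩ C = E then m1 B * m3 C else 0)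
      = if E = B ∩ C then (if A ⊆ B ∩ C then m1 B * m3 C else 0) else 0 := by
    intro E
    by_cases hE : E = B ∩ C
    · simp [hE, and_comm]
    · rw [if_neg hE, if_neg]
      exact fun ⟨_, h⟩ => hE h.symm
  simp_rw [this]
  rw [Finset.sum_ite_eq' Finset.univ (B ∩ C)]
  simp [Finset.subset_inter_iff, ite_and, mul_ite, ite_mul]
  split_ifs <;> ring

lemma commonality_nonneg {Ω : Type*} [Fintype Ω] [DecidableEq Ω]
    {m : Finset Ω → ℝ} (h : IsMass m) (A : Finset Ω) : 0 ≤ commonality m A := by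
  refine Finset.sum_nonneg fun E _ => ?_
  split_ifs <;> simp [h.1 E]

lemma commonality_le_one {Ω : Type*} [Fintype Ω] [DecidableEq Ω]
    {m : Finset Ω → ℝ} (h : IsMass m) (A : Finset Ω) : commonality m A ≤ 1 := by
  rw [← h.2]
  refine Finset.sum_le_sum fun E _ => ?_
  split_ifs <;> simp [h.1 E]

/-- For every real `k ≥ 1` and mass functions `m1, m2, m3`,
`∑_{A⊆Ω} |q_{m1 ⊚∩ m3}(A) − q_{m2 ⊚∩ m3}(A)|^k ≤ ∑_{A⊆Ω} |q_{m1}(A) − q_{m2}(A)|^k`,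
i.e. the `L_k` distance between commonalities is 1-Lipschitz w.r.t. conjunctive
combination with a fixed mass function. -/
theorem lk_commonality_conj_nonexpansive {Ω : Type*} [Fintype Ω] [DecidableEq Ω]
    (k : ℝ) (hk : 1 ≤ k) (m1 m2 m3 : Finset Ω → ℝ)
    (h1 : IsMass m1) (h2 : IsMass m2) (h3 : IsMass m3) :
    ∑ A : Finset Ω, |commonality (conjC m1 m3) A - commonality (conjC m2 m3) A| ^ k ≤
      ∑ A : Finset Ω, |commonality m1 A - commonality m2 A| ^ k := by
  refine Finset.sum_le_sum fun A _ => ?_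
  rw [commonality_conjC, commonality_conjC, ← sub_mul, abs_mul,
    abs_of_nonneg (commonality_nonneg h3 A)]
  have hk0 : 0 ≤ k := le_trans zero_le_one hk
  rw [Real.mul_rpow (abs_nonneg _) (commonality_nonneg h3 A)]
  calc |commonality m1 A - commonality m2 A| ^ k * commonality m3 A ^ k
      ≤ |commonality m1 A - commonality m2 A| ^ k * 1 := by
        apply mul_le_mul_of_nonneg_left _ (Real.rpow_nonneg (abs_nonneg _) k)
        exact Real.rpow_le_one (commonality_nonneg h3 A) (commonality_le_one h3 A) hk0
    _ = _ := mul_one _
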